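/- With the notation of the underlying ODE: if x is a C¹ solution of ẋ = A^diff x + ∑_{k=0}^{ν} C_k q^{(k)} on [0,τ] and there exists s ∈ [0,τ] such that x(s) = A^con x(s) + ∑_{k=1}^{ν} C_k q^{(k−1)}(s), where A^con = T [[I,0],[0,0]] T^{-1}, then x is a solution of E ẋ = A x + q on [0,τ]. -/

import Mathlib

open Matrix Set

set_option maxHeartbeats 2000000 in
theorem underlying_ODE_converse {F : Type*} [RCLike F] {nd na ν : ℕ}
    (E A S T : Matrix (Fin nd ⊕ Fin na) (Fin nd ⊕ Fin na) F)
    (N : Matrix (Fin na) (Fin na) F) (J : Matrix (Fin nd) (Fin nd) F)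
    (hS : IsUnit S.det) (hT : IsUnit T.det)
    (hE : S * E * T = Matrix.fromBlocks 1 0 0 N)
    (hA : S * A * T = Matrix.fromBlocks J 0 0 1)
    (hN : N ^ ν = 0)
    {τ : ℝ} (q x : ℝ → (Fin nd ⊕ Fin na) → F)
    (hq : ContDiff ℝ (⊤ : ℕ∞) q) (hx : ContDiff ℝ 1 x)
    (hode : ∀ t ∈ Set.Icc (0 : ℝ) τ,
      deriv x t = (T * Matrix.fromBlocks J 0 0 0 * T⁻¹).mulVec (x t) +
        ∑ k ∈ Finset.range (ν + 1),
          (if k = 0 then T * Matrix.fromBlocks 1 0 0 0 * S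
            else -(T * Matrix.fromBlocks 0 0 0 (N ^ (k - 1)) * S)).mulVec
            (iteratedDeriv k q t))
    (hcons : ∃ s ∈ Set.Icc (0 : ℝ) τ,
      x s = (T * Matrix.fromBlocks 1 0 0 0 * T⁻¹).mulVec (x s) +
        ∑ k ∈ Finset.range ν,
          (-(T * Matrix.fromBlocks 0 0 0 (N ^ k) * S)).mulVec (iteratedDeriv k q s)) :
    ∀ t ∈ Set.Icc (0 : ℝ) τ, E.mulVec (deriv x t) = A.mulVec (x t) + q t := by
  obtain ⟨s, hsmem, hconss⟩ := hcons
  have hT1 : T⁻¹ * T = 1 := Matrix.nonsing_inv_mul T hT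
  have hT2 : T * T⁻¹ = 1 := Matrix.mul_nonsing_inv T hT
  have hS1 : S⁻¹ * S = 1 := Matrix.nonsing_inv_mul S hS
  have hSE : S * E = Matrix.fromBlocks 1 0 0 N * T⁻¹ := by
    calc S * E = (S * E * T) * T⁻¹ := by rw [mul_assoc, hT2, mul_one]
    _ = _ := by rw [hE]
  have hSA : S * A = Matrix.fromBlocks J 0 0 1 * T⁻¹ := by
    calc S * A = (S * A * T) * T⁻¹ := by rw [mul_assoc, hT2, mul_one]
    _ = _ := by rw [hA]
  -- sandwich lemma
  have key : ∀ (B C R : Matrix (Fin nd ⊕ Fin na) (Fin nd ⊕ Fin na) F),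
      (B * T⁻¹) * (T * C * R) = B * C * R := by
    intro B C R
    calc (B * T⁻¹) * (T * C * R) = B * ((T⁻¹ * T) * (C * R)) := by
          simp only [Matrix.mul_assoc]
    _ = B * C * R := by rw [hT1, one_mul, ← Matrix.mul_assoc]
  -- derivative transport through matrices
  have hasD : ∀ (M : Matrix (Fin nd ⊕ Fin na) (Fin nd ⊕ Fin na) F)
      (f : ℝ → (Fin nd ⊕ Fin na) → F) (f' : (Fin nd ⊕ Fin na) → F) (t : ℝ),
      HasDerivAt f f' t → HasDerivAt (fun u => M.mulVec (f u)) (M.mulVec f') t := by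
    intro M f f' t hf
    have h := (LinearMap.toContinuousLinearMap
      ((Matrix.mulVecLin M).restrictScalars ℝ)).hasFDerivAt.comp_hasDerivAt t hf
    simpa [Function.comp_def] using h
  have pull : ∀ (M : Matrix (Fin nd ⊕ Fin na) (Fin nd ⊕ Fin na) F)
      (f : ℕ → (Fin nd ⊕ Fin na) → F) (r : Finset ℕ),
      M.mulVec (∑ k ∈ r, f k) = ∑ k ∈ r, M.mulVec (f k) := by
    intro M f r
    exact map_sum (Matrix.mulVecLin M) f r
  have hxd : ∀ t : ℝ, HasDerivAt x (deriv x t) t := fun t =>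
    ((hx.differentiable one_ne_zero) t).hasDerivAt
  have hqd : ∀ (k : ℕ) (t : ℝ),
      HasDerivAt (iteratedDeriv k q) (iteratedDeriv (k + 1) q t) t := by
    intro k t
    have hd : Differentiable ℝ (iteratedDeriv k q) :=
      hq.differentiable_iteratedDeriv k (by exact_mod_cast lt_top_iff_ne_top.2 (by simp))
    have := (hd t).hasDerivAt
    rwa [iteratedDeriv_succ]
  -- abbreviations
  set Qm : Matrix (Fin nd ⊕ Fin na) (Fin nd ⊕ Fin na) F :=
    T * Matrix.fromBlocks 0 0 0 1 * T⁻¹ with hQm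
  set Ck : ℕ → Matrix (Fin nd ⊕ Fin na) (Fin nd ⊕ Fin na) F :=
    fun k => T * Matrix.fromBlocks 0 0 0 (N ^ k) * S with hCk
  -- the auxiliary function
  set w : ℝ → (Fin nd ⊕ Fin na) → F := fun t =>
    Qm.mulVec (x t) + ∑ k ∈ Finset.range ν, (Ck k).mulVec (iteratedDeriv k q t) with hw
  -- rewrite the ODE without the `if`
  have hode' : ∀ t ∈ Set.Icc (0 : ℝ) τ,
      deriv x t = (T * Matrix.fromBlocks J 0 0 0 * T⁻¹).mulVec (x t)
        + (T * Matrix.fromBlocks 1 0 0 0 * S).mulVec (q t)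
        - ∑ k ∈ Finset.range ν, (Ck k).mulVec (iteratedDeriv (k + 1) q t) := by
    intro t ht
    have h := hode t ht
    rw [Finset.sum_range_succ'] at h
    simp only [Nat.succ_ne_zero, if_neg, if_pos, Nat.add_sub_cancel, iteratedDeriv_zero,
      Matrix.neg_mulVec, reduceIte] at h
    rw [h, Finset.sum_neg_distrib]
    simp only [hCk]
    abel
  -- derivative of w
  have hwd : ∀ t : ℝ, HasDerivAt w
      (Qm.mulVec (deriv x t)
        + ∑ k ∈ Finset.range ν, (Ck k).mulVec (iteratedDeriv (k + 1) q t)) t := by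
    intro t
    exact (hasD Qm x (deriv x t) t (hxd t)).add
      (HasDerivAt.fun_sum fun k _ =>
        hasD (Ck k) (iteratedDeriv k q) (iteratedDeriv (k + 1) q t) t (hqd k t))
  -- block computations
  have e1 : Qm * (T * Matrix.fromBlocks J 0 0 0 * T⁻¹) = 0 := by
    show (T * Matrix.fromBlocks 0 0 0 1) * T⁻¹ * (T * Matrix.fromBlocks J 0 0 0 * T⁻¹) = 0
    rw [key, Matrix.mul_assoc T]
    simp [Matrix.fromBlocks_multiply]
  have e2 : Qm * (T * Matrix.fromBlocks 1 0 0 0 * S) = 0 := by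
    show (T * Matrix.fromBlocks 0 0 0 1) * T⁻¹ * (T * Matrix.fromBlocks 1 0 0 0 * S) = 0
    rw [key, Matrix.mul_assoc T]
    simp [Matrix.fromBlocks_multiply]
  have e3 : ∀ k, Qm * Ck k = Ck k := by
    intro k
    show (T * Matrix.fromBlocks 0 0 0 1) * T⁻¹
        * (T * Matrix.fromBlocks 0 0 0 (N ^ k) * S) = Ck k
    rw [key, Matrix.mul_assoc T]
    simp [hCk, Matrix.fromBlocks_multiply, Matrix.mul_assoc]
  have hwzero : ∀ t ∈ Set.Icc (0 : ℝ) τ,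
      Qm.mulVec (deriv x t)
        + ∑ k ∈ Finset.range ν, (Ck k).mulVec (iteratedDeriv (k + 1) q t) = 0 := by
    intro t ht
    have e4 : Qm.mulVec (∑ k ∈ Finset.range ν, (Ck k).mulVec (iteratedDeriv (k + 1) q t))
        = ∑ k ∈ Finset.range ν, (Ck k).mulVec (iteratedDeriv (k + 1) q t) := by
      rw [pull]
      exact Finset.sum_congr rfl fun k _ => by
        rw [Matrix.mulVec_mulVec, e3 k]
    rw [hode' t ht, Matrix.mulVec_sub, Matrix.mulVec_add, Matrix.mulVec_mulVec,
      Matrix.mulVec_mulVec, e1, e2, e4]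
    simp
  -- w is constant on [0, τ]
  have hwconst : ∀ t ∈ Set.Icc (0 : ℝ) τ, w t = w 0 := by
    refine constant_of_has_deriv_right_zero
      (fun t _ => ((hwd t).continuousAt).continuousWithinAt) ?_
    intro t ht
    have h0 := (hwd t).hasDerivWithinAt (s := Set.Ici t)
    rwa [hwzero t (Set.mem_Icc.2 ⟨ht.1, le_of_lt ht.2⟩)] at h0
  -- w s = 0
  have hPQ : T * Matrix.fromBlocks 1 0 0 0 * T⁻¹ + Qm = 1 := by
    rw [hQm]
    calc T * Matrix.fromBlocks 1 0 0 0 * T⁻¹ + T * Matrix.fromBlocks 0 0 0 1 * T⁻¹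
        = T * (Matrix.fromBlocks 1 0 0 0 + Matrix.fromBlocks 0 0 0 1) * T⁻¹ := by
          rw [Matrix.mul_add, Matrix.add_mul]
    _ = 1 := by
          rw [show (Matrix.fromBlocks 1 0 0 0 + Matrix.fromBlocks 0 0 0 1 :
              Matrix (Fin nd ⊕ Fin na) (Fin nd ⊕ Fin na) F) = 1 by
            simp [Matrix.fromBlocks_add, ← Matrix.fromBlocks_one], mul_one, hT2]
  have hws : w s = 0 := by
    have h := hconss
    simp only [Matrix.neg_mulVec] at h
    rw [Finset.sum_neg_distrib] at h
    have h2 : x s - (T * Matrix.fromBlocks 1 0 0 0 * T⁻¹).mulVec (x s)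
        = - ∑ k ∈ Finset.range ν,
            (T * Matrix.fromBlocks 0 0 0 (N ^ k) * S).mulVec (iteratedDeriv k q s) := by
      nth_rewrite 1 [h]; abel
    have hQ1 : Qm.mulVec (x s)
        = x s - (T * Matrix.fromBlocks 1 0 0 0 * T⁻¹).mulVec (x s) := by
      have hq1 : Qm = 1 - (T * Matrix.fromBlocks 1 0 0 0 * T⁻¹) := by
        rw [← hPQ]; abel
      rw [hq1, Matrix.sub_mulVec, Matrix.one_mulVec]
    show Qm.mulVec (x s) + ∑ k ∈ Finset.range ν, (Ck k).mulVec (iteratedDeriv k q s) = 0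
    rw [hQ1, h2]
    simp only [hCk]
    abel
  have hw0 : ∀ t ∈ Set.Icc (0 : ℝ) τ, w t = 0 := by
    intro t ht
    rw [hwconst t ht, ← hwconst s hsmem, hws]
  -- final algebra
  intro t ht
  have hwt : Qm.mulVec (x t)
      = - ∑ k ∈ Finset.range ν, (Ck k).mulVec (iteratedDeriv k q t) := by
    have h := hw0 t ht
    rw [hw] at h
    simp only at h
    rw [eq_neg_iff_add_eq_zero]
    exact h
  have hgoal : (S * E).mulVec (deriv x t) = (S * A).mulVec (x t) + S.mulVec (q t) := by
    set g : ℕ → (Fin nd ⊕ Fin na) → F :=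
      fun k => (Matrix.fromBlocks 0 0 0 (N ^ k) * S).mulVec (iteratedDeriv k q t) with hg
    have f1 : (Matrix.fromBlocks 1 0 0 N * T⁻¹) * (T * Matrix.fromBlocks J 0 0 0 * T⁻¹)
        = Matrix.fromBlocks J 0 0 0 * T⁻¹ := by
      rw [key]
      congr 1
      simp [Matrix.fromBlocks_multiply]
    have f2 : (Matrix.fromBlocks 1 0 0 N * T⁻¹) * (T * Matrix.fromBlocks 1 0 0 0 * S)
        = Matrix.fromBlocks 1 0 0 0 * S := by
      rw [key]
      congr 1
      simp [Matrix.fromBlocks_multiply]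
    have f3 : ∀ k, (Matrix.fromBlocks 1 0 0 N * T⁻¹) * Ck k
        = Matrix.fromBlocks 0 0 0 (N ^ (k + 1)) * S := by
      intro k
      show (Matrix.fromBlocks 1 0 0 N * T⁻¹) * (T * Matrix.fromBlocks 0 0 0 (N ^ k) * S)
          = Matrix.fromBlocks 0 0 0 (N ^ (k + 1)) * S
      rw [key]
      congr 1
      simp [Matrix.fromBlocks_multiply, pow_succ']
    have hsum : ∑ k ∈ Finset.range ν, g (k + 1)
        = (∑ k ∈ Finset.range ν, g k) - g 0 := by
      have h1 := Finset.sum_range_succ' g ν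
      have h2 := Finset.sum_range_succ g ν
      have hgν : g ν = 0 := by simp [hg, hN]
      rw [hgν, add_zero] at h2
      rw [h2] at h1
      rw [eq_sub_iff_add_eq]
      exact h1.symm
    have c1 : T⁻¹ * Qm = Matrix.fromBlocks 0 0 0 1 * T⁻¹ := by
      rw [hQm]
      calc T⁻¹ * (T * Matrix.fromBlocks 0 0 0 1 * T⁻¹)
          = (T⁻¹ * T) * (Matrix.fromBlocks 0 0 0 1 * T⁻¹) := by simp only [Matrix.mul_assoc]
      _ = _ := by rw [hT1, one_mul]
    have c2 : ∀ k, T⁻¹ * Ck k = Matrix.fromBlocks 0 0 0 (N ^ k) * S := by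
      intro k
      show T⁻¹ * (T * Matrix.fromBlocks 0 0 0 (N ^ k) * S) = _
      calc T⁻¹ * (T * Matrix.fromBlocks 0 0 0 (N ^ k) * S)
          = (T⁻¹ * T) * (Matrix.fromBlocks 0 0 0 (N ^ k) * S) := by simp only [Matrix.mul_assoc]
      _ = _ := by rw [hT1, one_mul]
    have hwt' : (Matrix.fromBlocks 0 0 0 1 * T⁻¹).mulVec (x t)
        = - ∑ k ∈ Finset.range ν, g k := by
      have h := congrArg (fun v => T⁻¹.mulVec v) hwt
      simp only [Matrix.mulVec_mulVec, c1, Matrix.mulVec_neg] at h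
      rw [h]
      congr 1
      rw [pull]
      exact Finset.sum_congr rfl fun k _ => by
        rw [Matrix.mulVec_mulVec, c2 k]
    have eR : (Matrix.fromBlocks J 0 0 1 * T⁻¹).mulVec (x t)
        = (Matrix.fromBlocks J 0 0 0 * T⁻¹).mulVec (x t)
          + (Matrix.fromBlocks 0 0 0 1 * T⁻¹).mulVec (x t) := by
      rw [← Matrix.add_mulVec, ← Matrix.add_mul]
      congr 2
      simp [Matrix.fromBlocks_add]
    have eS : S.mulVec (q t) = (Matrix.fromBlocks 1 0 0 0 * S).mulVec (q t) + g 0 := by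
      have h1 : g 0 = (Matrix.fromBlocks 0 0 0 1 * S).mulVec (q t) := by simp [hg]
      rw [h1, ← Matrix.add_mulVec, ← Matrix.add_mul,
        show (Matrix.fromBlocks 1 0 0 0 + Matrix.fromBlocks 0 0 0 1 :
            Matrix (Fin nd ⊕ Fin na) (Fin nd ⊕ Fin na) F) = 1 by
          simp [Matrix.fromBlocks_add, ← Matrix.fromBlocks_one], one_mul]
    have eL : (Matrix.fromBlocks 1 0 0 N * T⁻¹).mulVec
        (∑ k ∈ Finset.range ν, (Ck k).mulVec (iteratedDeriv (k + 1) q t))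
        = ∑ k ∈ Finset.range ν, g (k + 1) := by
      rw [pull]
      exact Finset.sum_congr rfl fun k _ => by
        rw [Matrix.mulVec_mulVec, f3 k]
    rw [hSE, hSA, hode' t ht, Matrix.mulVec_sub, Matrix.mulVec_add, Matrix.mulVec_mulVec,
      Matrix.mulVec_mulVec, f1, f2, eL, hsum, eR, hwt', eS]
    abel
  have h := congrArg (fun v => S⁻¹.mulVec v) hgoal
  simpa [Matrix.mulVec_add, Matrix.mulVec_mulVec, ← Matrix.mul_assoc, hS1] using h
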